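/- Let p be a prime, n a positive integer, d a positive integer, and F(x) = x^d on F_{p^n}. If gcd(d, p^n − 1) = 1, then F is 0-differential bent₁. If gcd(d, p^n − 1) = 2, then F is not 0-differential bent₁. -/

import Mathlib

open Finset

noncomputable section

/-- Finite fields `GaloisField p n` are finite; fix a `Fintype` instance. -/
noncomputable instance (p n : ℕ) [Fact p.Prime] : Fintype (GaloisField p n) :=
  Fintype.ofFinite _

/-- `ζ_q = exp(2πi/q)`. -/
noncomputable def zetaC (q : ℕ) : ℂ := Complex.exp (2 * Real.pi * Complex.I / q)

/-- `ζ_p^t` for `t ∈ F_p`, computed via the integer lift of `t`. -/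
noncomputable def eChar (p : ℕ) (t : ZMod p) : ℂ := zetaC p ^ t.val

/-- The absolute trace `Tr_k : F_{p^k} → F_p`. -/
noncomputable def trAbs (p k : ℕ) [Fact p.Prime] (x : GaloisField p k) : ZMod p :=
  Algebra.trace (ZMod p) (GaloisField p k) x

/-- The Walsh transform `W_F(a,b) = ∑_x ζ_p^{Tr_m(b·F(x)) − Tr_n(a·x)}`. -/
noncomputable def Walsh (p n m : ℕ) [Fact p.Prime] (F : GaloisField p n → GaloisField p m)
    (a : GaloisField p n) (b : GaloisField p m) : ℂ :=
  ∑ x : GaloisField p n, eChar p (trAbs p m (b * F x) - trAbs p n (a * x))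

/-- The `c`-crosscorrelation `cC_{F,G}(u,b) = ∑_z ζ_p^{Tr_m(b(F(z+u) − c·G(z)))}`. -/
noncomputable def crossCorr (p n m : ℕ) [Fact p.Prime]
    (F G : GaloisField p n → GaloisField p m) (c : GaloisField p m)
    (u : GaloisField p n) (b : GaloisField p m) : ℂ :=
  ∑ x : GaloisField p n, eChar p (trAbs p m (b * (F (x + u) - c * G x)))

/-- The `c`-autocorrelation `cC_F = cC_{F,F}`. -/
noncomputable def autoCorr (p n m : ℕ) [Fact p.Prime]
    (F : GaloisField p n → GaloisField p m) (c : GaloisField p m)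
    (u : GaloisField p n) (b : GaloisField p m) : ℂ :=
  crossCorr p n m F F c u b

/-- `F` is perfect₁ `c`-nonlinear: `cC_F(u,b) = 0` for all `u ≠ 0`, `b ≠ 0`. -/
def PerfectCNonlinear1 (p n m : ℕ) [Fact p.Prime]
    (F : GaloisField p n → GaloisField p m) (c : GaloisField p m) : Prop :=
  ∀ u : GaloisField p n, u ≠ 0 → ∀ b : GaloisField p m, b ≠ 0 →
    autoCorr p n m F c u b = 0

/-- `F` is strictly perfect₁ `c`-nonlinear: `cC_F(u,b) = 0` for all `u`, all `b ≠ 0`. -/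
def StrictlyPerfectCNonlinear1 (p n m : ℕ) [Fact p.Prime]
    (F : GaloisField p n → GaloisField p m) (c : GaloisField p m) : Prop :=
  ∀ u : GaloisField p n, ∀ b : GaloisField p m, b ≠ 0 →
    autoCorr p n m F c u b = 0

/-- `F` is `c`-differential bent₁:
`W_F(x,b)·conj(W_F(x,bc)) = cC_F(0,b)` for all `x` and all `b ≠ 0`. -/
def CDifferentialBent1 (p n m : ℕ) [Fact p.Prime]
    (F : GaloisField p n → GaloisField p m) (c : GaloisField p m) : Prop :=
  ∀ x : GaloisField p n, ∀ b : GaloisField p m, b ≠ 0 →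
    Walsh p n m F x b * (starRingEnd ℂ) (Walsh p n m F x (b * c)) =
      autoCorr p n m F c 0 b

section aux
variable (p : ℕ) [hp : Fact p.Prime]

lemma zetaC_prim : IsPrimitiveRoot (zetaC p) p :=
  Complex.isPrimitiveRoot_exp p hp.out.ne_zero

lemma eChar_add (s t : ZMod p) : eChar p (s + t) = eChar p s * eChar p t := by
  have h1 : zetaC p ^ (p : ℕ) = 1 := (zetaC_prim p).pow_eq_one
  rw [eChar, eChar, eChar, ZMod.val_add, ← pow_eq_pow_mod _ h1, pow_add]

lemma eChar_zero : eChar p 0 = 1 := by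
  simp [eChar, ZMod.val_zero]

lemma eChar_ne_one {t : ZMod p} (ht : t ≠ 0) : eChar p t ≠ 1 := by
  intro h
  have hd := ((zetaC_prim p).pow_eq_one_iff_dvd t.val).mp h
  have h1 : t.val < p := ZMod.val_lt t
  have h2 : t.val ≠ 0 := by simpa [ZMod.val_eq_zero] using ht
  have := Nat.le_of_dvd (Nat.pos_of_ne_zero h2) hd
  omega

lemma eChar_mul_neg (t : ZMod p) : eChar p t * eChar p (-t) = 1 := by
  rw [← eChar_add]; simp [eChar_zero]

lemma eChar_conj (t : ZMod p) : (starRingEnd ℂ) (eChar p t) = eChar p (-t) := by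
  have habs : ‖eChar p t‖ = 1 := by
    rw [eChar, norm_pow, zetaC, Complex.norm_exp]
    norm_num
  have h1 : (starRingEnd ℂ) (eChar p t) * eChar p t = 1 := by
    rw [mul_comm, Complex.mul_conj]
    norm_cast
    rw [Complex.normSq_eq_norm_sq, habs]; norm_num
  have h2 := eChar_mul_neg p t
  rw [eq_inv_of_mul_eq_one_left h1, eq_inv_of_mul_eq_one_right h2]

variable (n : ℕ)

lemma trace_exists (a : GaloisField p n) (ha : a ≠ 0) :
    ∃ t, trAbs p n (a * t) ≠ 0 := by
  have htr := (traceForm_nondegenerate (ZMod p) (GaloisField p n)).1 a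
  simp_rw [Algebra.traceForm_apply] at htr
  by_contra! hf
  exact ha (htr hf)

lemma sum_eChar_tr {a : GaloisField p n} (ha : a ≠ 0) :
    ∑ x : GaloisField p n, eChar p (trAbs p n (a * x)) = 0 := by
  obtain ⟨t, ht⟩ := trace_exists p n a ha
  have key : ∑ x : GaloisField p n, eChar p (trAbs p n (a * x))
      = eChar p (trAbs p n (a * t)) * ∑ x : GaloisField p n, eChar p (trAbs p n (a * x)) := by
    calc ∑ x : GaloisField p n, eChar p (trAbs p n (a * x))
        = ∑ x : GaloisField p n, eChar p (trAbs p n (a * (x + t))) :=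
          (Equiv.sum_comp (Equiv.addRight t) fun x => eChar p (trAbs p n (a * x))).symm
      _ = ∑ x : GaloisField p n, eChar p (trAbs p n (a * t)) * eChar p (trAbs p n (a * x)) := by
          refine Finset.sum_congr rfl fun x _ => ?_
          simp only [mul_add, trAbs, map_add, eChar_add]
          ring
      _ = _ := by rw [Finset.mul_sum]
  have hne := eChar_ne_one p ht
  have : (1 - eChar p (trAbs p n (a * t))) *
      ∑ x : GaloisField p n, eChar p (trAbs p n (a * x)) = 0 := by
    linear_combination key
  rcases mul_eq_zero.mp this with h | h
  · exact absurd (by linear_combination -h) hne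
  · exact h

open scoped Classical in
/-- Full orthogonality relation. -/
lemma sum_eChar_tr' (t : GaloisField p n) :
    ∑ b : GaloisField p n, eChar p (trAbs p n (b * t)) =
      if t = 0 then (Fintype.card (GaloisField p n) : ℂ) else 0 := by
  split_ifs with h
  · subst h
    simp [trAbs, eChar_zero]
  · calc ∑ b : GaloisField p n, eChar p (trAbs p n (b * t))
        = ∑ b : GaloisField p n, eChar p (trAbs p n (t * b)) := by
          refine Finset.sum_congr rfl fun b _ => by rw [mul_comm]
      _ = 0 := sum_eChar_tr p n h

lemma orderOf_dvd_gcd (hn : 0 < n) (d : ℕ) {u : GaloisField p n} (hu : u ≠ 0)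
    (h : u ^ d = 1) : orderOf u ∣ Nat.gcd d (p ^ n - 1) := by
  refine Nat.dvd_gcd (orderOf_dvd_of_pow_eq_one h) (orderOf_dvd_of_pow_eq_one ?_)
  have hcard : Fintype.card (GaloisField p n) = p ^ n := by
    rw [← Nat.card_eq_fintype_card, GaloisField.card p n hn.ne']
  rw [← hcard]
  exact FiniteField.pow_card_sub_one_eq_one u hu

end aux

theorem statement_7 (p n : ℕ) [Fact p.Prime] (hn : 0 < n) (d : ℕ) (hd : 0 < d) :
    (Nat.gcd d (p ^ n - 1) = 1 →
      CDifferentialBent1 p n n (fun x => x ^ d) 0) ∧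
    (Nat.gcd d (p ^ n - 1) = 2 →
      ¬ CDifferentialBent1 p n n (fun x => x ^ d) 0) := by
  classical
  set q : ℕ := Fintype.card (GaloisField p n) with hqdef
  have hq2 : 2 ≤ q := Fintype.one_lt_card
  -- basic rewrites
  have hS0 : ∀ b : GaloisField p n,
      autoCorr p n n (fun x => x ^ d) 0 0 b
        = ∑ x : GaloisField p n, eChar p (trAbs p n (b * x ^ d)) := by
    intro b
    unfold autoCorr crossCorr
    simp only [add_zero, zero_mul, sub_zero]
  have hW0 : ∀ b : GaloisField p n,
      Walsh p n n (fun x => x ^ d) 0 b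
        = ∑ x : GaloisField p n, eChar p (trAbs p n (b * x ^ d)) := by
    intro b
    unfold Walsh
    simp only [zero_mul, trAbs, map_zero, sub_zero]
  have hW0' : ∀ x : GaloisField p n, x ≠ 0 →
      Walsh p n n (fun x => x ^ d) x 0 = 0 := by
    intro x hx
    unfold Walsh
    calc ∑ y : GaloisField p n,
          eChar p (trAbs p n (0 * y ^ d) - trAbs p n (x * y))
        = ∑ y : GaloisField p n, eChar p (trAbs p n ((-x) * y)) := by
          refine Finset.sum_congr rfl fun y _ => ?_
          congr 1
          simp [trAbs, neg_mul]
      _ = 0 := sum_eChar_tr p n (neg_ne_zero.mpr hx)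
  have hW00 : Walsh p n n (fun x => x ^ d) 0 0 = (q : ℂ) := by
    unfold Walsh
    simp [trAbs, eChar_zero, hqdef]
  constructor
  · -- gcd = 1
    intro hgcd x b hb
    have hbij : Function.Bijective (fun x : GaloisField p n => x ^ d) := by
      refine Finite.injective_iff_bijective.mp ?_
      intro x y h
      simp only at h
      by_cases hy : y = 0
      · subst hy
        rw [zero_pow hd.ne'] at h
        exact pow_eq_zero_iff hd.ne' |>.mp h
      · have hx0 : x ≠ 0 := by
          intro hx0; subst hx0
          rw [zero_pow hd.ne'] at h
          exact hy (pow_eq_zero_iff hd.ne' |>.mp h.symm)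
        have hu : x * y⁻¹ ≠ 0 := mul_ne_zero hx0 (inv_ne_zero hy)
        have hud : (x * y⁻¹) ^ d = 1 := by
          rw [mul_pow, inv_pow, h, mul_inv_cancel₀ (pow_ne_zero d hy)]
        have hdvd := orderOf_dvd_gcd p n hn d hu hud
        rw [hgcd, Nat.dvd_one] at hdvd
        have : x * y⁻¹ = 1 := orderOf_eq_one_iff.mp hdvd
        field_simp at this
        exact this
    have hSb : (∑ x : GaloisField p n, eChar p (trAbs p n (b * x ^ d))) = 0 := by
      rw [Fintype.sum_bijective _ hbij _
        (fun y => eChar p (trAbs p n (b * y))) (fun x => rfl)]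
      exact sum_eChar_tr p n hb
    rw [hS0 b, hSb]
    by_cases hx : x = 0
    · subst hx
      rw [hW0 b, hSb, zero_mul]
    · rw [mul_zero, hW0' x hx, map_zero, mul_zero]
  · -- gcd = 2
    intro hgcd hbent
    have hdvd2d : 2 ∣ d := hgcd ▸ Nat.gcd_dvd_left d _
    have hdvd2q : 2 ∣ p ^ n - 1 := hgcd ▸ Nat.gcd_dvd_right d _
    have hp2 : p ≠ 2 := by
      rintro rfl
      have hpow : 2 ∣ 2 ^ n := dvd_pow_self 2 hn.ne'
      have h1 : 1 ≤ 2 ^ n := Nat.one_le_two_pow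
      omega
    have hne11 : (-1 : GaloisField p n) ≠ 1 :=
      Ring.neg_one_ne_one_of_char_ne_two (by rw [ringChar.eq (GaloisField p n) p]; exact hp2)
    have heven : Even d := (even_iff_two_dvd).mpr hdvd2d
    -- S b = 0 for b ≠ 0
    have hS : ∀ b : GaloisField p n, b ≠ 0 →
        (∑ x : GaloisField p n, eChar p (trAbs p n (b * x ^ d))) = 0 := by
      intro b hb
      have h := hbent 0 b hb
      rw [mul_zero, hW00, hW0 b, hS0 b, map_natCast] at h
      have h2 : (∑ x : GaloisField p n, eChar p (trAbs p n (b * x ^ d))) * ((q : ℂ) - 1) = 0 := by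
        linear_combination h
      rcases mul_eq_zero.mp h2 with h3 | h3
      · exact h3
      · exfalso
        have : (q : ℂ) = 1 := by linear_combination h3
        have : q = 1 := by exact_mod_cast this
        omega
    set S : GaloisField p n → ℂ :=
      fun b => ∑ x : GaloisField p n, eChar p (trAbs p n (b * x ^ d)) with hSdef
    have hT1 : ∑ b : GaloisField p n, S b * (starRingEnd ℂ) (S b) = (q : ℂ) * q := by
      rw [Finset.sum_eq_single 0]
      · have hS0' : S 0 = (q : ℂ) := by
          simp [hSdef, trAbs, eChar_zero, hqdef]
        rw [hS0', map_natCast]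
      · intro b _ hb; rw [show S b = 0 from hS b hb, zero_mul]
      · intro h; exact absurd (Finset.mem_univ 0) h
    have hterm : ∀ b x y : GaloisField p n,
        eChar p (trAbs p n (b * x ^ d)) * (starRingEnd ℂ) (eChar p (trAbs p n (b * y ^ d)))
          = eChar p (trAbs p n (b * (x ^ d - y ^ d))) := by
      intro b x y
      rw [eChar_conj, ← eChar_add]
      congr 1
      simp only [trAbs, mul_sub, map_sub]
      ring
    have hT2 : ∑ b : GaloisField p n, S b * (starRingEnd ℂ) (S b)
        = ∑ x : GaloisField p n, ∑ y : GaloisField p n,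
            (if x ^ d - y ^ d = 0 then (q : ℂ) else 0) := by
      calc ∑ b : GaloisField p n, S b * (starRingEnd ℂ) (S b)
          = ∑ b : GaloisField p n, ∑ x : GaloisField p n, ∑ y : GaloisField p n,
              eChar p (trAbs p n (b * (x ^ d - y ^ d))) := by
            refine Finset.sum_congr rfl fun b _ => ?_
            rw [hSdef]
            dsimp only
            rw [map_sum, Finset.sum_mul_sum]
            exact Finset.sum_congr rfl fun x _ =>
              Finset.sum_congr rfl fun y _ => hterm b x y
        _ = ∑ x : GaloisField p n, ∑ y : GaloisField p n, ∑ b : GaloisField p n,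
              eChar p (trAbs p n (b * (x ^ d - y ^ d))) := by
            rw [Finset.sum_comm]
            exact Finset.sum_congr rfl fun x _ => Finset.sum_comm
        _ = _ := by
            refine Finset.sum_congr rfl fun x _ => Finset.sum_congr rfl fun y _ => ?_
            rw [sum_eChar_tr' p n (x ^ d - y ^ d), hqdef]
    have hinner : ∀ x : GaloisField p n,
        (∑ y : GaloisField p n, if x ^ d - y ^ d = 0 then (q : ℂ) else 0)
          = if x = 0 then (q : ℂ) else 2 * q := by
      intro x
      by_cases hx : x = 0
      · subst hx
        rw [if_pos rfl]
        have hiff : ∀ y : GaloisField p n, ((0 : GaloisField p n) ^ d - y ^ d = 0) ↔ y = 0 := by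
          intro y
          rw [zero_pow hd.ne', zero_sub, neg_eq_zero, pow_eq_zero_iff hd.ne']
        calc (∑ y : GaloisField p n, if (0 : GaloisField p n) ^ d - y ^ d = 0 then (q : ℂ) else 0)
            = ∑ y : GaloisField p n, if y = 0 then (q : ℂ) else 0 :=
              Finset.sum_congr rfl fun y _ => by rw [if_congr (hiff y) rfl rfl]
          _ = (q : ℂ) := by rw [Finset.sum_ite_eq' univ (0 : GaloisField p n)
                (fun _ => (q : ℂ))]; simp
      · rw [if_neg hx]
        have hxny : x ≠ -x := by
          intro hxe
          have h1 : x * x⁻¹ = (-x) * x⁻¹ := by rw [← hxe]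
          rw [mul_inv_cancel₀ hx, neg_mul, mul_inv_cancel₀ hx] at h1
          exact hne11 h1.symm
        have hiff : ∀ y : GaloisField p n,
            (x ^ d - y ^ d = 0) ↔ y ∈ ({x, -x} : Finset (GaloisField p n)) := by
          intro y
          rw [Finset.mem_insert, Finset.mem_singleton, sub_eq_zero]
          constructor
          · intro h
            have hy0 : y ≠ 0 := by
              intro hy0; subst hy0
              rw [zero_pow hd.ne'] at h
              exact hx (pow_eq_zero_iff hd.ne' |>.mp h)
            have hu : y * x⁻¹ ≠ 0 := mul_ne_zero hy0 (inv_ne_zero hx)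
            have hud : (y * x⁻¹) ^ d = 1 := by
              rw [mul_pow, inv_pow, ← h, mul_inv_cancel₀ (pow_ne_zero d hx)]
            have hdvd := orderOf_dvd_gcd p n hn d hu hud
            rw [hgcd] at hdvd
            have hu2 : (y * x⁻¹) ^ 2 = 1 := orderOf_dvd_iff_pow_eq_one.mp hdvd
            have hfac : ((y * x⁻¹) - 1) * ((y * x⁻¹) + 1) = 0 := by
              linear_combination hu2
            rcases mul_eq_zero.mp hfac with hca | hca
            · left
              have : y * x⁻¹ = 1 := by linear_combination hca
              calc y = y * x⁻¹ * x := by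
                    rw [mul_assoc, inv_mul_cancel₀ hx, mul_one]
                _ = x := by rw [this, one_mul]
            · right
              have : y * x⁻¹ = -1 := by linear_combination hca
              calc y = y * x⁻¹ * x := by
                    rw [mul_assoc, inv_mul_cancel₀ hx, mul_one]
                _ = -x := by rw [this]; ring
          · rintro (rfl | rfl)
            · rfl
            · rw [heven.neg_pow]
        calc (∑ y : GaloisField p n, if x ^ d - y ^ d = 0 then (q : ℂ) else 0)
            = ∑ y : GaloisField p n,
                if y ∈ ({x, -x} : Finset (GaloisField p n)) then (q : ℂ) else 0 :=
              Finset.sum_congr rfl fun y _ => by rw [if_congr (hiff y) rfl rfl]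
          _ = ∑ _y ∈ ({x, -x} : Finset (GaloisField p n)), (q : ℂ) := by
              rw [Finset.sum_ite_mem, Finset.univ_inter]
          _ = 2 * q := by
              rw [Finset.sum_const, Finset.card_pair hxny]
              ring
    have htotal : (∑ x : GaloisField p n, if x = 0 then (q : ℂ) else 2 * q)
        = 2 * q * q - q := by
      have hsplit : ∀ x : GaloisField p n,
          (if x = 0 then (q : ℂ) else 2 * q) = 2 * q - (if x = 0 then (q : ℂ) else 0) := by
        intro x; split_ifs <;> ring
      rw [Finset.sum_congr rfl fun x _ => hsplit x, Finset.sum_sub_distrib,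
        Finset.sum_const, Finset.sum_ite_eq' univ (0 : GaloisField p n) (fun _ => (q : ℂ))]
      simp only [Finset.mem_univ, if_pos, Finset.card_univ, nsmul_eq_mul, ← hqdef]
      ring
    have hfinal : (q : ℂ) * q = 2 * q * q - q := by
      rw [← hT1, hT2, Finset.sum_congr rfl fun x _ => hinner x, htotal]
    have hzero : (q : ℂ) * ((q : ℂ) - 1) = 0 := by linear_combination -hfinal
    rcases mul_eq_zero.mp hzero with h | h
    · have : q = 0 := by exact_mod_cast h
      omega
    · have : (q : ℂ) = 1 := by linear_combination h
      have : q = 1 := by exact_mod_cast this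
      omega
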